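/- Any n-dimensional Lagrangian submanifold M of a complex space form M̃(4c) satisfies the pointwise Ricci bound: the maximal Ricci curvature obeys Ric_max ≤ (n−1)c + (n²/4)‖H‖², where H is the mean curvature vector. -/

import Mathlib

open Finset

/-- Chen's Ricci inequality for Lagrangian submanifolds of a complex space form
`M̃(4c)`, in its Gauss-equation algebraic form: if `h : Fin n → Fin n → E` is the
(symmetric, normal-bundle valued) second fundamental form and
`H = (1/n) Σᵢ h i i` the mean curvature vector, then the Ricci curvature of a
unit vector `e₀`,
`Ric(e₀,e₀) = (n-1)c + Σᵢ (⟨h e0 e0, h i i⟩ - ‖h e0 i‖²)`,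
is at most `(n-1)c + (n²/4)‖H‖²`. -/
theorem chen_ricci_inequality_lagrangian
    {E : Type*} [NormedAddCommGroup E] [InnerProductSpace ℝ E]
    (n : ℕ) (hn : 2 ≤ n) (c : ℝ) (h : Fin n → Fin n → E)
    (hsymm : ∀ i j, h i j = h j i)
    (e0 : Fin n) :
    ((n : ℝ) - 1) * c +
        ∑ i : Fin n, ((inner ℝ (h e0 e0) (h i i) : ℝ) - ‖h e0 i‖ ^ 2)
      ≤ ((n : ℝ) - 1) * c +
        ((n : ℝ) ^ 2 / 4) * ‖(n : ℝ)⁻¹ • ∑ i : Fin n, h i i‖ ^ 2 := by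
  have hn0 : (n : ℝ) ≠ 0 := by positivity
  set a := h e0 e0 with ha
  set S := ∑ i : Fin n, h i i with hS
  gcongr
  -- goal: ∑ i, (⟨a, h i i⟩ - ‖h e0 i‖²) ≤ (n²/4) * ‖n⁻¹ • S‖²
  have hrhs : ((n : ℝ) ^ 2 / 4) * ‖(n : ℝ)⁻¹ • S‖ ^ 2 = ‖S‖ ^ 2 / 4 := by
    rw [norm_smul]
    simp only [Real.norm_eq_abs, abs_inv, Nat.abs_cast]
    field_simp
  rw [hrhs]
  have hsum : ∑ i : Fin n, ((inner ℝ a (h i i) : ℝ) - ‖h e0 i‖ ^ 2)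
      = (inner ℝ a S : ℝ) - ∑ i : Fin n, ‖h e0 i‖ ^ 2 := by
    rw [Finset.sum_sub_distrib, hS, inner_sum]
  rw [hsum]
  have h1 : ‖a‖ ^ 2 ≤ ∑ i : Fin n, ‖h e0 i‖ ^ 2 := by
    have := Finset.single_le_sum (f := fun i => ‖h e0 i‖ ^ 2)
      (fun i _ => by positivity) (Finset.mem_univ e0)
    simpa [ha] using this
  have h2 : (inner ℝ a S : ℝ) - ‖a‖ ^ 2 ≤ ‖S‖ ^ 2 / 4 := by
    have key : (0 : ℝ) ≤ ‖S - (2 : ℝ) • a‖ ^ 2 := by positivity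
    rw [norm_sub_sq_real, norm_smul] at key
    simp only [inner_smul_right, Real.norm_eq_abs] at key
    have hc : (inner ℝ S a : ℝ) = inner ℝ a S := real_inner_comm a S
    rw [hc] at key
    have habs : |(2:ℝ)| = 2 := by norm_num
    rw [habs] at key
    nlinarith [key]
  linarith
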